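/- arXiv:0710.4077 — 7 statements merged into one kernel-verified Lean document; each statement's English description precedes it below -/
import Mathlib

section
/- Let G be a group and a, b ∈ G elements such that: (I) the only element commuting with both a and b is the identity; (II) for all x, y, z ∈ G, x²y²z² = 1 implies that x, y, z pairwise commute; (III) G has unique square roots, i.e. x² = y² implies x = y; (IV) for all x ∈ G, [x², a] = 1 implies [x, a] = 1. Then the equation x²·a·x²·a⁻¹·(y·b·y·b⁻¹)⁻² = 1 has only the trivial solution x = 1, y = 1 in G. -/
theorem stmt_0 (G : Type*) [Group G] (a b : G)
    (hI : ∀ x : G, Commute x a → Commute x b → x = 1)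
    (hII : ∀ x y z : G, x ^ 2 * y ^ 2 * z ^ 2 = 1 →
      Commute x y ∧ Commute x z ∧ Commute y z)
    (hIII : ∀ x y : G, x ^ 2 = y ^ 2 → x = y)
    (hIV : ∀ x : G, Commute (x ^ 2) a → Commute x a) :
    ∀ x y : G, x ^ 2 * a * x ^ 2 * a⁻¹ * ((y * b * y * b⁻¹) ^ 2)⁻¹ = 1 →
      x = 1 ∧ y = 1 := by
  intro x y h
  -- The equation is literally a product of three squares equal to 1.
  have key : (x ^ 2 * a) ^ 2 * (a⁻¹) ^ 2 * ((y * b * y * b⁻¹)⁻¹) ^ 2 = 1 := by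
    have e : (x ^ 2 * a) ^ 2 * (a⁻¹) ^ 2 * ((y * b * y * b⁻¹)⁻¹) ^ 2 =
        x ^ 2 * a * x ^ 2 * a⁻¹ * ((y * b * y * b⁻¹) ^ 2)⁻¹ := by
      simp [pow_two, mul_inv_rev, mul_assoc]
    rw [e]; exact h
  obtain ⟨h1, h2, h3⟩ := hII _ _ _ key
  -- From Commute (x^2 * a) a⁻¹ we get Commute (x^2) a, and then Commute x a by hIV.
  have h1' : Commute (x ^ 2 * a) a := by simpa using h1.inv_right
  have hx2a : Commute (x ^ 2) a := by
    have h4 : Commute (x ^ 2 * a * a⁻¹) a := h1'.mul_left ((Commute.refl a).inv_left)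
    simpa using h4
  have hxa : Commute x a := hIV x hx2a
  -- Then the equation collapses to (x^2)^2 = (y*b*y*b⁻¹)^2, so x^2 = y*b*y*b⁻¹.
  have h5 : x ^ 2 * a * x ^ 2 * a⁻¹ = (y * b * y * b⁻¹) ^ 2 := mul_inv_eq_one.mp h
  have h6 : x ^ 2 * a * x ^ 2 * a⁻¹ = x ^ 2 * x ^ 2 := by
    rw [mul_assoc (x ^ 2) a (x ^ 2), hx2a.symm.eq]; simp [mul_assoc]
  have hsq : (x ^ 2) ^ 2 = (y * b * y * b⁻¹) ^ 2 := by
    rw [pow_two (x ^ 2), ← h6]; exact h5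
  have hc : x ^ 2 = y * b * y * b⁻¹ := hIII _ _ hsq
  -- A second three-squares identity: x^2 * b^2 * ((y*b)⁻¹)^2 = 1.
  have key2 : x ^ 2 * b ^ 2 * ((y * b)⁻¹) ^ 2 = 1 := by
    rw [hc]; simp [pow_two, mul_inv_rev, mul_assoc]
  obtain ⟨hxb, hxyb, hbyb⟩ := hII _ _ _ key2
  have hx1 : x = 1 := hI x hxa hxb
  -- Now y commutes with b, and y*b*y*b⁻¹ = 1 gives y^2 = 1, so y = 1.
  have h7 : Commute b (y * b) := by simpa using hbyb.inv_right
  have h8 : b * y * b = y * b * b := by rw [mul_assoc]; exact h7.eq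
  have hyb : b * y = y * b := mul_right_cancel h8
  have h9 : y * b * y * b⁻¹ = 1 := by
    rw [hx1] at hc; simpa using hc.symm
  have h10 : y * b * y * b⁻¹ = y ^ 2 := by
    rw [mul_assoc y b y, hyb]; simp [pow_two, mul_assoc]
  have hy2 : y ^ 2 = 1 := h10.symm.trans h9
  have hy1 : y = 1 := hIII y 1 (by simpa using hy2)
  exact ⟨hx1, hy1⟩
end

section
/- Let G be a group in which x²y²z² = 1 implies that x, y, z pairwise commute, and suppose G has unique square roots. If x, y, b ∈ G satisfy x² = (yb)²·b⁻², then [x, b] = 1 and [y, b] = 1. -/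
open scoped commutatorElement

theorem stmt_1 (G : Type*) [Group G]
    (hII : ∀ x y z : G, x ^ 2 * y ^ 2 * z ^ 2 = 1 →
      Commute x y ∧ Commute x z ∧ Commute y z)
    (hIII : ∀ x y : G, x ^ 2 = y ^ 2 → x = y) :
    ∀ x y b : G, x ^ 2 = (y * b) ^ 2 * (b⁻¹) ^ 2 →
      ⁅x, b⁆ = 1 ∧ ⁅y, b⁆ = 1 := by
  intro x y b h
  have h1 : (y * b) ^ 2 * (b⁻¹) ^ 2 * (x⁻¹) ^ 2 = 1 := by
    rw [← h]; group
  obtain ⟨c1, c2, c3⟩ := hII _ _ _ h1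
  have hxb : Commute x b := by
    have := c3.inv_left.inv_right
    simpa using this.symm
  have hyb : Commute y b := by
    have h2 : Commute (y * b) b := by simpa using c1.inv_right
    have h3 : y * b * b = b * (y * b) := h2.eq
    have : y * b = b * y := by
      have := mul_right_cancel (a := y * b) (b := b) (c := b * y)
        (by rw [h3]; group)
      exact this
    exact this
  exact ⟨commutatorElement_eq_one_iff_commute.mpr hxb,
    commutatorElement_eq_one_iff_commute.mpr hyb⟩
end

section
/- Let G be a group with elements a, b satisfying: (I) only the identity commutes with both a and b; (II) x²y²z² = 1 implies x, y, z pairwise commute; (III) G has unique square roots; (IV) [x², a] = 1 implies [x, a] = 1. Then for all s₁, s₂ ∈ G: (s₁ = 1 and s₂ = 1) if and only if s₁²·a·s₁²·a⁻¹·(s₂·b·s₂·b⁻¹)⁻² = 1. In particular, a conjunction of two equations over G is equivalent to a single equation. -/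
theorem stmt_3 (G : Type*) [Group G] (a b : G)
    (hI : ∀ x : G, Commute x a → Commute x b → x = 1)
    (hII : ∀ x y z : G, x ^ 2 * y ^ 2 * z ^ 2 = 1 →
      Commute x y ∧ Commute x z ∧ Commute y z)
    (hIII : ∀ x y : G, x ^ 2 = y ^ 2 → x = y)
    (hIV : ∀ x : G, Commute (x ^ 2) a → Commute x a) :
    ∀ s₁ s₂ : G, (s₁ = 1 ∧ s₂ = 1) ↔
      s₁ ^ 2 * a * s₁ ^ 2 * a⁻¹ * ((s₂ * b * s₂ * b⁻¹) ^ 2)⁻¹ = 1 := by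
  intro s₁ s₂
  constructor
  · rintro ⟨rfl, rfl⟩
    group
  · intro h
    set W : G := s₂ * b * s₂ * b⁻¹ with hWdef
    have hE : s₁ ^ 2 * a * s₁ ^ 2 * a⁻¹ = W ^ 2 := mul_inv_eq_one.mp h
    -- First application of (II)
    have h1 : (s₁ ^ 2 * a) ^ 2 * (a⁻¹) ^ 2 * (W⁻¹) ^ 2 = 1 := by
      have : (s₁ ^ 2 * a) ^ 2 * (a⁻¹) ^ 2 * (W⁻¹) ^ 2
          = s₁ ^ 2 * a * s₁ ^ 2 * a⁻¹ * (W ^ 2)⁻¹ := by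
        simp [pow_two, mul_assoc]
      rw [this, hE, mul_inv_cancel]
    obtain ⟨hxa, _, _⟩ := hII _ _ _ h1
    have h2 : Commute (s₁ ^ 2 * a) a := by simpa using hxa.inv_right
    have hs2a : Commute (s₁ ^ 2) a := by
      have h3 := h2.mul_left ((Commute.refl a).inv_left)
      simpa [mul_assoc] using h3
    have hs1a : Commute s₁ a := hIV s₁ hs2a
    -- W = s₁ ^ 2
    have key : s₁ ^ 2 * a * s₁ ^ 2 * a⁻¹ = (s₁ ^ 2) ^ 2 := by
      rw [mul_assoc (s₁ ^ 2) a (s₁ ^ 2), ← hs2a.eq]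
      group
    have hWs : W = s₁ ^ 2 := hIII _ _ (hE.symm.trans key)
    -- Second application of (II)
    have hW1 : s₂ * b * s₂ * b⁻¹ = s₁ ^ 2 := hWs
    have h3 : (s₂ * b) ^ 2 * (b⁻¹) ^ 2 * (s₁⁻¹) ^ 2 = 1 := by
      have e : (s₂ * b) ^ 2 * (b⁻¹) ^ 2 = s₂ * b * s₂ * b⁻¹ := by
        simp [pow_two, mul_assoc]
      rw [e, hW1]
      group
    obtain ⟨h5, _, h7⟩ := hII _ _ _ h3
    have hs2b : Commute s₂ b := by
      have h6 : Commute (s₂ * b) b := by simpa using h5.inv_right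
      have h8 := h6.mul_left ((Commute.refl b).inv_left)
      simpa [mul_assoc] using h8
    have hs1b : Commute s₁ b := by
      have := h7.inv_left.inv_right
      simpa using this.symm
    have hs1 : s₁ = 1 := hI s₁ hs1a hs1b
    refine ⟨hs1, hIII s₂ 1 ?_⟩
    have e2 : s₂ ^ 2 = s₂ * b * s₂ * b⁻¹ := by
      rw [mul_assoc s₂ b s₂, ← hs2b.eq, pow_two]
      simp [mul_assoc]
    rw [e2, hW1, hs1]
end

section
/- Let G be a group and let g₀, g₁, …, g_r be elements of G such that for each i < r the consecutive elements do not commute ([gᵢ, gᵢ₊₁] ≠ 1), and such that the sequence is 'geodesic' in the non-commutation graph: for all i and j with j ≥ i+2 one has [gᵢ, g_j] = 1 (no shortcut edges). Then the chain of centralizers G > C(g₀) > C(g₀, g₁) > … > C(g₀, …, g_{r-1}) is strictly descending, where C(g₀, …, g_k) denotes the intersection of the centralizers of g₀, …, g_k. -/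
theorem stmt_4 (G : Type*) [Group G] (r : ℕ) (g : ℕ → G)
    (hadj : ∀ i, i < r → ¬ Commute (g i) (g (i + 1)))
    (hfar : ∀ i j, j ≤ r → i + 2 ≤ j → Commute (g i) (g j)) :
    (1 ≤ r → Subgroup.centralizer {x | ∃ i ≤ 0, x = g i} < ⊤) ∧
    ∀ k, k + 1 < r →
      Subgroup.centralizer {x | ∃ i ≤ k + 1, x = g i} <
      Subgroup.centralizer {x | ∃ i ≤ k, x = g i} := by
  constructor
  · intro hr
    rw [SetLike.lt_iff_le_and_exists]
    refine ⟨le_top, g 1, trivial, ?_⟩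
    intro h
    rw [Subgroup.mem_centralizer_iff] at h
    exact hadj 0 hr (h (g 0) ⟨0, le_refl 0, rfl⟩)
  · intro k hk
    rw [SetLike.lt_iff_le_and_exists]
    refine ⟨?_, g (k + 2), ?_, ?_⟩
    · apply Subgroup.centralizer_le
      rintro x ⟨i, hi, rfl⟩
      exact ⟨i, hi.trans (Nat.le_succ k), rfl⟩
    · rw [Subgroup.mem_centralizer_iff]
      rintro x ⟨i, hi, rfl⟩
      exact hfar i (k + 2) hk (by omega)
    · intro h
      rw [Subgroup.mem_centralizer_iff] at h
      exact hadj (k + 1) hk (h (g (k + 1)) ⟨k + 1, le_refl _, rfl⟩)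
end

section
/- Let G be a group, H a G-group (a group with a distinguished embedded copy of G), and suppose: (a) H is a G-domain, i.e. for all x, y ∈ H with x ≠ 1 ≠ y there exists g ∈ H such that [x, g⁻¹yg] ≠ 1; (b) H is G-separated by G, i.e. for every nontrivial h ∈ H there is a G-homomorphism φ: H → G (restricting to the identity on G) with φ(h) ≠ 1. Then H is G-discriminated by G: for every finite set h₁, …, h_n of nontrivial elements of H there is a single G-homomorphism φ: H → G with φ(hᵢ) ≠ 1 for all i. -/
open scoped commutatorElement

theorem stmt_9 (G H : Type*) [Group G] [Group H] (ι : G →* H)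
    (hι : Function.Injective ι)
    (hdom : ∀ x y : H, x ≠ 1 → y ≠ 1 → ∃ g : H, ⁅x, g⁻¹ * y * g⁆ ≠ 1)
    (hsep : ∀ h : H, h ≠ 1 →
      ∃ φ : H →* G, (∀ g : G, φ (ι g) = g) ∧ φ h ≠ 1) :
    ∀ (n : ℕ) (h : Fin n → H), (∀ i, h i ≠ 1) →
      ∃ φ : H →* G, (∀ g : G, φ (ι g) = g) ∧ ∀ i, φ (h i) ≠ 1 := by
  have aux : ∀ (n : ℕ) (h : Fin n → H), (∀ i, h i ≠ 1) → ∀ x : H, x ≠ 1 →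
      ∃ w : H, w ≠ 1 ∧ ∀ φ : H →* G, φ w ≠ 1 → ∀ i, φ (h i) ≠ 1 := by
    intro n
    induction n with
    | zero => exact fun h _ x hx => ⟨x, hx, fun φ _ i => i.elim0⟩
    | succ n ih =>
      intro h hne x hx
      obtain ⟨w', hw', hprop⟩ := ih (fun i => h i.succ) (fun i => hne i.succ) x hx
      obtain ⟨g, hg⟩ := hdom (h 0) w' (hne 0) hw'
      refine ⟨⁅h 0, g⁻¹ * w' * g⁆, hg, fun φ hφ i => ?_⟩
      have hmap : φ ⁅h 0, g⁻¹ * w' * g⁆ = ⁅φ (h 0), (φ g)⁻¹ * φ w' * φ g⁆ := by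
        simp [map_commutatorElement]
      have h0 : φ (h 0) ≠ 1 := by
        intro h1; apply hφ; rw [hmap, h1]; simp [commutatorElement_def]
      have hw : φ w' ≠ 1 := by
        intro h1; apply hφ; rw [hmap, h1]; simp [commutatorElement_def]
      exact Fin.cases h0 (fun j => hprop φ hw j) i
  intro n h hne
  by_cases hx : ∃ x : H, x ≠ 1
  · obtain ⟨x, hx⟩ := hx
    obtain ⟨w, hw, hprop⟩ := aux n h hne x hx
    obtain ⟨φ, hφG, hφw⟩ := hsep w hw
    exact ⟨φ, hφG, hprop φ hφw⟩
  · push_neg at hx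
    refine ⟨1, fun g => ?_, fun i => absurd (hx (h i)) (hne i)⟩
    have : ι g = ι 1 := by rw [map_one]; exact hx _
    simpa using (hι this).symm
end

section
/- Let G be a group with elements a, b satisfying axioms (I)-(IV): (I) C(a) ∩ C(b) = 1; (II) x²y²z² = 1 implies pairwise commutation; (III) unique square roots; (IV) [x², a] = 1 implies [x, a] = 1. Suppose additionally there exist a', b' ∈ G such that [x,y] = 1, [x, y^{a'}] = 1, [x, y^{b'}] = 1 together imply x = 1 or y = 1. Then for any s₁, s₂ ∈ G one can express the condition (s₁ ≠ 1 and s₂ ≠ 1) as a single inequation r ≠ 1, and the condition (s₁ ≠ 1 or s₂ ≠ 1) as a single inequation t ≠ 1, where r and t are explicit words in s₁, s₂, a, b, a', b'. Concretely: (s₁ ≠ 1 ∧ s₂ ≠ 1) holds iff NOT every one of [s₁,s₂]=1, [s₁,s₂^{a'}]=1, [s₁,s₂^{b'}]=1 holds after combining them into one equation via the conjunction-encoding, and (s₁ ≠ 1 ∨ s₂ ≠ 1) holds iff s₁²·a·s₁²·a⁻¹·(s₂·b·s₂·b⁻¹)⁻² ≠ 1. -/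
open scoped commutatorElement

/-- The Malcev-type conjunction-encoding word: `E a b s t = 1` iff `s = 1 ∧ t = 1`
(under axioms (I)-(IV)). -/
def malcevE {G : Type*} [Group G] (a b s t : G) : G :=
  s ^ 2 * a * s ^ 2 * a⁻¹ * ((t * b * t * b⁻¹) ^ 2)⁻¹

theorem malcev_key {G : Type*} [Group G] (a b : G)
    (hI : ∀ x : G, Commute x a → Commute x b → x = 1)
    (hII : ∀ x y z : G, x ^ 2 * y ^ 2 * z ^ 2 = 1 →
      Commute x y ∧ Commute x z ∧ Commute y z)
    (hIII : ∀ x y : G, x ^ 2 = y ^ 2 → x = y)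
    (hIV : ∀ x : G, Commute (x ^ 2) a → Commute x a)
    (s t : G) : malcevE a b s t = 1 ↔ s = 1 ∧ t = 1 := by
  constructor
  · intro h
    have heq : s ^ 2 * a * s ^ 2 * a⁻¹ = (t * b * t * b⁻¹) ^ 2 := by
      unfold malcevE at h
      rwa [mul_inv_eq_one] at h
    set w : G := t * b * t * b⁻¹ with hw
    -- First application of (II)
    have h1 : s ^ 2 * (a * s * a⁻¹) ^ 2 * (w⁻¹) ^ 2 = 1 := by
      have e : s ^ 2 * (a * s * a⁻¹) ^ 2 * (w⁻¹) ^ 2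
          = (s ^ 2 * a * s ^ 2 * a⁻¹) * (w ^ 2)⁻¹ := by
        simp only [pow_two, mul_inv_rev, inv_inv]
        simp [mul_assoc]
      rw [e, heq, mul_inv_cancel]
    obtain ⟨hxc, hxw', hcw'⟩ := hII s (a * s * a⁻¹) w⁻¹ h1
    have hxw : Commute s w := by simpa using hxw'.inv_right
    have hs2w2 : Commute (s ^ 2) (w ^ 2) := hxw.pow_pow 2 2
    -- Second application of (II), same word regrouped
    have e1 : a * s ^ 2 * a⁻¹ * s ^ 2 = w ^ 2 := by
      have h' : s ^ 2 * (a * s ^ 2 * a⁻¹ * s ^ 2) = s ^ 2 * w ^ 2 := by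
        calc s ^ 2 * (a * s ^ 2 * a⁻¹ * s ^ 2)
            = (s ^ 2 * a * s ^ 2 * a⁻¹) * s ^ 2 := by simp [mul_assoc]
          _ = w ^ 2 * s ^ 2 := by rw [heq]
          _ = s ^ 2 * w ^ 2 := hs2w2.eq.symm
      exact mul_left_cancel h'
    have h2 : a ^ 2 * (a⁻¹ * s ^ 2) ^ 2 * (w⁻¹) ^ 2 = 1 := by
      have e : a ^ 2 * (a⁻¹ * s ^ 2) ^ 2 * (w⁻¹) ^ 2
          = (a * s ^ 2 * a⁻¹ * s ^ 2) * (w ^ 2)⁻¹ := by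
        simp only [pow_two, mul_inv_rev, inv_inv]
        simp [mul_assoc]
      rw [e, e1, mul_inv_cancel]
    obtain ⟨hA, hAw, hBw⟩ := hII a (a⁻¹ * s ^ 2) w⁻¹ h2
    have hs2a : Commute (s ^ 2) a := by
      have h' : Commute a (a * (a⁻¹ * s ^ 2)) := (Commute.refl a).mul_right hA
      have e : a * (a⁻¹ * s ^ 2) = s ^ 2 := by simp
      rw [e] at h'
      exact h'.symm
    have hsa : Commute s a := hIV s hs2a
    -- w = s ^ 2 via unique square roots
    have hws2 : w = s ^ 2 := by
      apply hIII
      have e : (s ^ 2) ^ 2 = s ^ 2 * a * s ^ 2 * a⁻¹ := by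
        calc (s ^ 2) ^ 2 = s ^ 2 * (s ^ 2 * a) * a⁻¹ := by
              simp only [pow_two]; simp [mul_assoc]
          _ = s ^ 2 * (a * s ^ 2) * a⁻¹ := by rw [hs2a.eq]
          _ = s ^ 2 * a * s ^ 2 * a⁻¹ := by simp [mul_assoc]
      exact (e.trans heq).symm
    -- Third application of (II)
    have h4 : s ^ 2 * b ^ 2 * ((t * b)⁻¹) ^ 2 = 1 := by
      have e : s ^ 2 * b ^ 2 * ((t * b)⁻¹) ^ 2 = s ^ 2 * (t * b * t * b⁻¹)⁻¹ := by
        simp only [pow_two, mul_inv_rev, inv_inv]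
        simp [mul_assoc]
      rw [e, ← hw, hws2, mul_inv_cancel]
    obtain ⟨hsb, hstb, hbtb⟩ := hII s b (t * b)⁻¹ h4
    have hs1 : s = 1 := hI s hsa hsb
    have hbt : Commute b t := by
      have h' : Commute b (t * b) := by simpa using hbtb.inv_right
      have h'' : Commute b (t * b * b⁻¹) := h'.mul_right (Commute.refl b).inv_right
      simpa using h''
    have hw1 : w = 1 := by rw [hws2, hs1]; simp
    have ht2 : t ^ 2 = 1 := by
      have e : t * b * t * b⁻¹ = t ^ 2 := by
        calc t * b * t * b⁻¹ = t * (b * t) * b⁻¹ := by simp [mul_assoc]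
          _ = t * (t * b) * b⁻¹ := by rw [hbt.eq]
          _ = t ^ 2 := by simp only [pow_two]; simp [mul_assoc]
      rw [← e, ← hw]
      exact hw1
    have ht1 : t = 1 := hIII t 1 (by simpa using ht2)
    exact ⟨hs1, ht1⟩
  · rintro ⟨rfl, rfl⟩
    unfold malcevE
    simp

theorem stmt_12 (G : Type*) [Group G] (a b a' b' : G)
    (hI : ∀ x : G, Commute x a → Commute x b → x = 1)
    (hII : ∀ x y z : G, x ^ 2 * y ^ 2 * z ^ 2 = 1 →
      Commute x y ∧ Commute x z ∧ Commute y z)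
    (hIII : ∀ x y : G, x ^ 2 = y ^ 2 → x = y)
    (hIV : ∀ x : G, Commute (x ^ 2) a → Commute x a)
    (hdom : ∀ x y : G, ⁅x, y⁆ = 1 → ⁅x, a'⁻¹ * y * a'⁆ = 1 →
      ⁅x, b'⁻¹ * y * b'⁆ = 1 → x = 1 ∨ y = 1) :
    ∀ s₁ s₂ : G,
      ((s₁ ≠ 1 ∧ s₂ ≠ 1) ↔
        malcevE a b (malcevE a b ⁅s₁, s₂⁆ ⁅s₁, a'⁻¹ * s₂ * a'⁆)
          ⁅s₁, b'⁻¹ * s₂ * b'⁆ ≠ 1) ∧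
      ((s₁ ≠ 1 ∨ s₂ ≠ 1) ↔
        s₁ ^ 2 * a * s₁ ^ 2 * a⁻¹ * ((s₂ * b * s₂ * b⁻¹) ^ 2)⁻¹ ≠ 1) := by
  have key := malcev_key a b hI hII hIII hIV
  intro s₁ s₂
  constructor
  · constructor
    · rintro ⟨h1, h2⟩ hcon
      rw [key] at hcon
      obtain ⟨hin, hc3⟩ := hcon
      rw [key] at hin
      obtain ⟨hc1, hc2⟩ := hin
      rcases hdom s₁ s₂ hc1 hc2 hc3 with h | h
      · exact h1 h
      · exact h2 h
    · intro hne
      constructor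
      · rintro rfl
        apply hne
        rw [key]
        refine ⟨(key _ _).mpr ⟨?_, ?_⟩, ?_⟩ <;>
          simp [commutatorElement_def, mul_assoc]
      · rintro rfl
        apply hne
        rw [key]
        refine ⟨(key _ _).mpr ⟨?_, ?_⟩, ?_⟩ <;>
          simp [commutatorElement_def, mul_assoc]
  · show (s₁ ≠ 1 ∨ s₂ ≠ 1) ↔ malcevE a b s₁ s₂ ≠ 1
    constructor
    · rintro (h | h) hE
      · exact h ((key _ _).mp hE).1
      · exact h ((key _ _).mp hE).2
    · intro hne
      by_contra hcon
      push_neg at hcon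
      exact hne ((key _ _).mpr hcon)
end

section
/- Let G be a group, let D be a positive integer, and suppose every strictly descending chain of centralizers of subsets of G has length at most D (i.e. G has centraliser dimension at most D). Let g₀, …, g_r be elements such that consecutive elements do not commute and non-consecutive elements commute. Then r ≤ D. -/
theorem stmt_14 (G : Type*) [Group G] (D : ℕ) (hD : 0 < D)
    (hcdim : ∀ (d : ℕ) (C : ℕ → Subgroup G),
      (∀ k ≤ d, ∃ S : Set G, C k = Subgroup.centralizer S) →
      (∀ k, k < d → C (k + 1) < C k) → d ≤ D)
    (r : ℕ) (g : ℕ → G)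
    (hadj : ∀ i, i < r → ¬ Commute (g i) (g (i + 1)))
    (hfar : ∀ i j, j ≤ r → i + 2 ≤ j → Commute (g i) (g j)) :
    r ≤ D := by
  set C : ℕ → Subgroup G := fun k => Subgroup.centralizer (g '' {i | i < k}) with hC
  apply hcdim r C
  · intro k _
    exact ⟨g '' {i | i < k}, rfl⟩
  · intro k hk
    constructor
    · exact Subgroup.centralizer_le (Set.image_mono fun i hi => lt_trans hi (Nat.lt_succ_self k))
    · intro hle
      have hmem : g (k + 1) ∈ C k := by
        rw [hC]
        rw [Subgroup.mem_centralizer_iff]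
        rintro x ⟨i, hi, rfl⟩
        have hik : i < k := hi
        exact hfar i (k + 1) hk (by omega)
      have hmem' : g (k + 1) ∈ C (k + 1) := hle hmem
      rw [hC, Subgroup.mem_centralizer_iff] at hmem'
      have := hmem' (g k) ⟨k, Nat.lt_succ_self k, rfl⟩
      exact hadj k hk this
end
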